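/- For every ν > 0, the function x ↦ x^ν K_ν(x) is positive, continuous, and (weakly) decreasing on (0, ∞), where K_ν is the modified Bessel function of the second kind. -/

import Mathlib

open MeasureTheory Real Set

lemma cosh_quad (t : ℝ) : t^2/2 ≤ Real.cosh t := by
  have h1 : Real.cosh t = 1 + 2 * Real.sinh (t/2)^2 := by
    have := Real.cosh_two_mul (t/2)
    have h2 := Real.cosh_sq (t/2)
    rw [show 2 * (t/2) = t by ring] at this
    rw [this, h2]; ring
  have h3 : (t/2)^2 ≤ Real.sinh (t/2)^2 := by
    have := Real.abs_sinh (t/2)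
    have h4 : |t/2| ≤ Real.sinh |t/2| := Real.self_le_sinh_iff.2 (abs_nonneg _)
    calc (t/2)^2 = |t/2|^2 := (sq_abs _).symm
    _ ≤ Real.sinh |t/2| ^2 := by
        apply pow_le_pow_left₀ (abs_nonneg _) h4
    _ = Real.sinh (t/2)^2 := by rw [← this, sq_abs]
  nlinarith

lemma integ_exp_cosh (a c : ℝ) (hc : 0 < c) :
    Integrable (fun t : ℝ => Real.exp (a * t - c * Real.cosh t)) := by
  have hg : Integrable (fun t : ℝ => Real.exp (a^2/(2*c)) * Real.exp (-(c/2) * (t - a/c)^2)) := by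
    exact ((integrable_exp_neg_mul_sq (by positivity : (0:ℝ) < c/2)).comp_sub_right (a/c)).const_mul _
  refine hg.mono' ?_ ?_
  · exact (Real.continuous_exp.comp (by continuity)).aestronglyMeasurable
  · filter_upwards with t
    rw [Real.norm_eq_abs, abs_of_nonneg (Real.exp_pos _).le, ← Real.exp_add]
    apply Real.exp_le_exp.2
    have h1 : c * (t^2/2) ≤ c * Real.cosh t := by
      exact mul_le_mul_of_nonneg_left (cosh_quad t) hc.le
    have h2 : a * t - c * (t^2/2) = a^2/(2*c) + -(c/2) * (t - a/c)^2 := by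
      field_simp; ring
    linarith

/-- Modified Bessel function of the second kind, via the integral representation
`K_ν(x) = ∫₀^∞ cosh(ν t) e^{-x cosh t} dt`. -/
noncomputable def besselK (ν x : ℝ) : ℝ :=
  ∫ t in Set.Ioi (0 : ℝ), Real.cosh (ν * t) * Real.exp (-x * Real.cosh t)

lemma cosh_le_exp_abs (y : ℝ) : Real.cosh y ≤ Real.exp |y| := by
  rw [← Real.cosh_abs, Real.cosh_eq]
  nlinarith [Real.exp_pos |y|, Real.exp_pos (-|y|),
    Real.exp_le_exp.2 (neg_le_self (abs_nonneg y))]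

lemma besselK_integrable (ν x : ℝ) (hx : 0 < x) :
    IntegrableOn (fun t => Real.cosh (ν * t) * Real.exp (-x * Real.cosh t)) (Ioi (0:ℝ)) := by
  refine ((integ_exp_cosh |ν| x hx).integrableOn (s := Ioi 0)).mono' ?_ ?_
  · exact (Continuous.aestronglyMeasurable (by continuity)).restrict
  · rw [ae_restrict_iff' measurableSet_Ioi]
    filter_upwards with t ht
    have ht' : (0:ℝ) ≤ t := le_of_lt ht
    have h2 : Real.cosh (ν * t) ≤ Real.exp (|ν| * t) := by
      simpa [abs_mul, abs_of_nonneg ht'] using cosh_le_exp_abs (ν * t)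
    have hc : 0 < Real.cosh (ν * t) := Real.cosh_pos _
    rw [Real.norm_eq_abs, abs_of_nonneg (by positivity), sub_eq_add_neg, Real.exp_add]
    rw [neg_mul]; exact mul_le_mul_of_nonneg_right h2 (Real.exp_pos _).le

lemma besselK_sym (ν x : ℝ) (hx : 0 < x) :
    (∫ t : ℝ, Real.exp (ν * t - x * Real.cosh t)) = 2 * besselK ν x := by
  have hint := (integ_exp_cosh ν x hx)
  have hint' := (integ_exp_cosh (-ν) x hx)
  have h1 : (∫ t in Iic (0:ℝ), Real.exp (ν * t - x * Real.cosh t))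
      = ∫ t in Ioi (0:ℝ), Real.exp (-ν * t - x * Real.cosh t) := by
    have := integral_comp_neg_Iic (0:ℝ) (fun t => Real.exp (-ν * t - x * Real.cosh t))
    rw [neg_zero] at this
    rw [← this]
    congr 1; funext t
    rw [Real.cosh_neg]; ring_nf
  rw [← intervalIntegral.integral_Iic_add_Ioi hint.integrableOn hint.integrableOn, h1,
    ← integral_add hint'.integrableOn hint.integrableOn]
  rw [besselK, ← MeasureTheory.integral_const_mul]
  congr 1; funext t
  simp only [Real.cosh_eq, sub_eq_add_neg, neg_mul, Real.exp_add]
  ring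

lemma cov_deriv (x : ℝ) (hx : 0 < x) : ∀ t ∈ (univ : Set ℝ),
    HasDerivWithinAt (fun t : ℝ => Real.exp (-t) / (2*x)) (-(Real.exp (-t)/(2*x))) univ t := by
  intro t _
  have h := ((Real.hasDerivAt_exp (-t)).comp t (hasDerivAt_neg t)).div_const (2*x)
  rw [show -(Real.exp (-t)/(2*x)) = Real.exp (-t) * -1 / (2*x) by ring]
  exact h.hasDerivWithinAt

lemma cov_inj (x : ℝ) (hx : 0 < x) :
    InjOn (fun t : ℝ => Real.exp (-t) / (2*x)) univ := by
  intro a _ b _ h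
  field_simp at h
  exact neg_injective (Real.exp_injective h)

lemma cov_img (x : ℝ) (hx : 0 < x) :
    (fun t : ℝ => Real.exp (-t) / (2*x)) '' univ = Ioi 0 := by
  rw [image_univ]
  ext u
  simp only [mem_range, mem_Ioi]
  constructor
  · rintro ⟨t, rfl⟩; positivity
  · intro hu
    refine ⟨-Real.log (2*x*u), ?_⟩
    rw [neg_neg, Real.exp_log (by positivity)]
    field_simp

lemma cov_pointwise (ν x t : ℝ) (hx : 0 < x) :
    |(-(Real.exp (-t)/(2*x)))| •
      ((2*x*(Real.exp (-t)/(2*x))) ^ (-ν) * ((Real.exp (-t)/(2*x))⁻¹ *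
        Real.exp (-(1/(4*(Real.exp (-t)/(2*x))) + x^2*(Real.exp (-t)/(2*x))))))
      = Real.exp (ν * t - x * Real.cosh t) := by
  set u := Real.exp (-t) / (2*x) with hu
  have hupos : 0 < u := by rw [hu]; positivity
  have h2xu : 2*x*u = Real.exp (-t) := by rw [hu]; field_simp
  have habs : |(-u)| = u := by rw [abs_neg, abs_of_pos hupos]
  have hr : (Real.exp (-t)) ^ (-ν) = Real.exp (ν * t) := by
    rw [← Real.exp_mul]; congr 1; ring
  have hexp : Real.exp (-t) * Real.exp t = 1 := by
    rw [← Real.exp_add]; simp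
  have harg : 1/(4*u) + x^2*u = x * Real.cosh t := by
    rw [hu, Real.cosh_eq]
    simp only [Real.exp_neg]
    field_simp
    ring
  rw [smul_eq_mul, habs, h2xu, hr, harg]
  have : u * (Real.exp (ν*t) * (u⁻¹ * Real.exp (-(x * Real.cosh t))))
      = Real.exp (ν*t) * Real.exp (-(x*Real.cosh t)) := by
    field_simp
  rw [this, ← Real.exp_add, ← sub_eq_add_neg]

lemma besselK_cov (ν x : ℝ) (hx : 0 < x) :
    (∫ t : ℝ, Real.exp (ν * t - x * Real.cosh t))
      = ∫ u in Ioi (0:ℝ), (2*x*u) ^ (-ν) * (u⁻¹ * Real.exp (-(1/(4*u) + x^2*u))) := by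
  have key := integral_image_eq_integral_abs_deriv_smul MeasurableSet.univ
    (cov_deriv x hx) (cov_inj x hx)
    (fun u => (2*x*u) ^ (-ν) * (u⁻¹ * Real.exp (-(1/(4*u) + x^2*u))))
  rw [cov_img x hx, Measure.restrict_univ] at key
  rw [key]
  congr 1; funext t
  exact (cov_pointwise ν x t hx).symm

lemma besselK_cov_integrable (ν x : ℝ) (hx : 0 < x) :
    IntegrableOn (fun u : ℝ => (2*x*u) ^ (-ν) * (u⁻¹ * Real.exp (-(1/(4*u) + x^2*u)))) (Ioi 0) := by
  have key := integrableOn_image_iff_integrableOn_abs_deriv_smul MeasurableSet.univ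
    (cov_deriv x hx) (cov_inj x hx)
    (fun u => (2*x*u) ^ (-ν) * (u⁻¹ * Real.exp (-(1/(4*u) + x^2*u))))
  rw [cov_img x hx] at key
  rw [key, IntegrableOn, Measure.restrict_univ]
  exact (integ_exp_cosh ν x hx).congr
    (ae_of_all _ fun t => (cov_pointwise ν x t hx).symm)

lemma repr_eqOn (ν x : ℝ) (hx : 0 < x) :
    EqOn (fun u : ℝ => (2*x*u) ^ (-ν) * (u⁻¹ * Real.exp (-(1/(4*u) + x^2*u))))
      (fun u : ℝ => (2:ℝ)^(-ν) * x^(-ν) * (u ^ (-ν-1) * Real.exp (-(1/(4*u) + x^2*u))))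
      (Ioi 0) := by
  intro u hu
  rw [mem_Ioi] at hu
  simp only
  rw [Real.mul_rpow (by positivity) hu.le, Real.mul_rpow (by norm_num) hx.le,
    show (-ν - 1 : ℝ) = -ν + (-1) by ring, Real.rpow_add hu, Real.rpow_neg_one]
  ring

lemma repr_integrable (ν x : ℝ) (hx : 0 < x) :
    IntegrableOn (fun u : ℝ => u ^ (-ν-1) * Real.exp (-(1/(4*u) + x^2*u))) (Ioi 0) := by
  have hc : (0:ℝ) < (2:ℝ)^(-ν) * x^(-ν) := by
    positivity
  have h : IntegrableOn (fun u : ℝ => ((2:ℝ)^(-ν) * x^(-ν))⁻¹ *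
      ((2:ℝ)^(-ν) * x^(-ν) * (u ^ (-ν-1) * Real.exp (-(1/(4*u) + x^2*u))))) (Ioi 0) :=
    ((besselK_cov_integrable ν x hx).congr_fun (repr_eqOn ν x hx)
      measurableSet_Ioi).const_mul (((2:ℝ)^(-ν) * x^(-ν))⁻¹)
  refine h.congr_fun ?_ measurableSet_Ioi
  intro u _
  simp only
  rw [inv_mul_cancel_left₀ hc.ne']

lemma besselK_repr (ν x : ℝ) (hx : 0 < x) :
    x ^ ν * besselK ν x
      = 2^(-ν-1) * ∫ u in Ioi (0:ℝ), u ^ (-ν-1) * Real.exp (-(1/(4*u) + x^2*u)) := by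
  have h := besselK_sym ν x hx
  have h2 := besselK_cov ν x hx
  rw [setIntegral_congr_fun measurableSet_Ioi (repr_eqOn ν x hx), integral_const_mul] at h2
  set I := ∫ u in Ioi (0:ℝ), u ^ (-ν-1) * Real.exp (-(1/(4*u) + x^2*u)) with hI
  have hb : besselK ν x = 1/2 * ((2:ℝ)^(-ν) * x^(-ν) * I) := by
    rw [← h2, ← hI] at *
    linarith [h]
  have hxx : x^ν * x^(-ν) = 1 := by rw [← Real.rpow_add hx]; simp
  have h22 : (2:ℝ)^(-ν-1) = 1/2 * 2^(-ν) := by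
    rw [Real.rpow_sub (by norm_num), Real.rpow_one]; ring
  rw [hb, h22]
  linear_combination (1/2 * (2:ℝ)^(-ν) * I) * hxx

/-- For `ν > 0`, the function `x ↦ x^ν K_ν(x)` is positive, continuous and
(weakly) decreasing on `(0, ∞)`. -/
theorem stmt2 (ν : ℝ) (hν : 0 < ν) :
    (∀ x ∈ Set.Ioi (0 : ℝ), 0 < x ^ ν * besselK ν x) ∧
    ContinuousOn (fun x : ℝ => x ^ ν * besselK ν x) (Set.Ioi 0) ∧
    AntitoneOn (fun x : ℝ => x ^ ν * besselK ν x) (Set.Ioi 0) := by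
  -- positivity
  have hpos : ∀ x ∈ Set.Ioi (0 : ℝ), 0 < x ^ ν * besselK ν x := by
    intro x hx
    rw [mem_Ioi] at hx
    have hb : 0 < besselK ν x := by
      rw [besselK, setIntegral_pos_iff_support_of_nonneg_ae ?_ (besselK_integrable ν x hx)]
      · have hsub : Ioi (0:ℝ) ⊆
            (Function.support fun t => Real.cosh (ν * t) * Real.exp (-x * Real.cosh t)) ∩ Ioi 0 := by
          intro t ht
          refine ⟨?_, ht⟩
          have : 0 < Real.cosh (ν * t) * Real.exp (-x * Real.cosh t) := by positivity
          exact ne_of_gt this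
        refine lt_of_lt_of_le ?_ (measure_mono hsub)
        rw [Real.volume_Ioi]
        exact ENNReal.zero_lt_top
      · filter_upwards with t
        positivity
    exact mul_pos (Real.rpow_pos_of_pos hx ν) hb
  refine ⟨hpos, ?_, ?_⟩
  -- continuity
  · refine ContinuousOn.congr (f := fun x : ℝ =>
      2^(-ν-1) * ∫ u in Ioi (0:ℝ), u ^ (-ν-1) * Real.exp (-(1/(4*u) + x^2*u))) ?_
      (fun x hx => besselK_repr ν x hx) 
    intro x₀ hx₀
    rw [mem_Ioi] at hx₀
    apply ContinuousAt.continuousWithinAt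
    refine continuousAt_const.mul ?_
    refine continuousAt_of_dominated (F := fun (x u : ℝ) =>
        u ^ (-ν-1) * Real.exp (-(1/(4*u) + x^2*u)))
      (bound := fun u => u ^ (-ν-1) * Real.exp (-(1/(4*u) + (x₀/2)^2*u))) ?_ ?_ ?_ ?_
    · filter_upwards with x
      refine (Measurable.aestronglyMeasurable ?_).restrict
      fun_prop
    · have hmem : Ioi (x₀/2) ∈ nhds x₀ := isOpen_Ioi.mem_nhds (by simpa using by linarith)
      filter_upwards [hmem] with x hx
      rw [ae_restrict_iff' measurableSet_Ioi]
      filter_upwards with u hu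
      rw [mem_Ioi] at hx hu
      have h1 : (0:ℝ) ≤ u ^ (-ν-1) := Real.rpow_nonneg hu.le _
      rw [Real.norm_eq_abs, abs_of_nonneg (by positivity)]
      refine mul_le_mul_of_nonneg_left (Real.exp_le_exp.2 ?_) h1
      have hx2 : (x₀/2)^2 ≤ x^2 := by nlinarith
      nlinarith [mul_le_mul_of_nonneg_right hx2 hu.le]
    · exact repr_integrable ν (x₀/2) (by linarith)
    · filter_upwards with u
      fun_prop
  -- antitone
  · intro a ha b hb hab
    rw [mem_Ioi] at ha hb
    simp only
    rw [besselK_repr ν a ha, besselK_repr ν b hb]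
    refine mul_le_mul_of_nonneg_left ?_ (by positivity)
    refine setIntegral_mono_on (repr_integrable ν b hb) (repr_integrable ν a ha)
      measurableSet_Ioi ?_
    intro u hu
    rw [mem_Ioi] at hu
    refine mul_le_mul_of_nonneg_left (Real.exp_le_exp.2 ?_) (Real.rpow_nonneg hu.le _)
    have : a^2 ≤ b^2 := by nlinarith
    nlinarith [mul_le_mul_of_nonneg_right this hu.le]
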